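/- arXiv:1603.06303 — 5 statements merged into one kernel-verified Lean document; each statement's English description precedes it below -/
import Mathlib

section
/- If x_1, ..., x_n are positive real numbers and K > 0 satisfies ∑_{j=1}^n j·x_j ≤ K, then log(∏_{j=1}^n x_j) ≤ 2·√(K/e). -/
open Finset

lemma sum_log_lb (n : ℕ) : (n : ℝ) * Real.log n - n ≤ ∑ j ∈ Icc 1 n, Real.log j := by
  induction n with
  | zero => simp
  | succ n ih =>
    rw [Finset.sum_Icc_succ_top (by omega)]
    have h1 : (n : ℝ) * (Real.log (n + 1) - Real.log n) ≤ 1 := by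
      rcases Nat.eq_zero_or_pos n with h | h
      · simp [h]
      · have hn : (0 : ℝ) < n := by exact_mod_cast h
        have h2 : Real.log (((n : ℝ) + 1) / n) ≤ ((n : ℝ) + 1) / n - 1 :=
          Real.log_le_sub_one_of_pos (by positivity)
        rw [Real.log_div (by positivity) (by positivity)] at h2
        have h3 := mul_le_mul_of_nonneg_left h2 hn.le
        have h4 : (n : ℝ) * (((n : ℝ) + 1) / n - 1) = 1 := by field_simp; ring
        linarith
    push_cast
    nlinarith [ih]

theorem sums_to_products (n : ℕ) (x : ℕ → ℝ) (K : ℝ) (hK : 0 < K)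
    (hx : ∀ j ∈ Icc 1 n, 0 < x j)
    (hsum : ∑ j ∈ Icc 1 n, (j : ℝ) * x j ≤ K) :
    Real.log (∏ j ∈ Icc 1 n, x j) ≤ 2 * Real.sqrt (K / Real.exp 1) := by
  rcases Nat.eq_zero_or_pos n with rfl | hn
  · simp only [show Icc 1 0 = (∅ : Finset ℕ) by rfl, Finset.prod_empty, Real.log_one]
    positivity
  set t := Real.sqrt (K / Real.exp 1) with ht
  have ht0 : 0 < t := Real.sqrt_pos.2 (by positivity)
  have hK' : K = Real.exp 1 * t ^ 2 := by
    rw [ht, Real.sq_sqrt (by positivity)]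
    field_simp
  have hn0 : (0 : ℝ) < n := by exact_mod_cast hn
  set c : ℝ := n / K with hc
  have hc0 : 0 < c := by positivity
  have hlog : Real.log (∏ j ∈ Icc 1 n, x j) = ∑ j ∈ Icc 1 n, Real.log (x j) :=
    Real.log_prod (fun j hj => (hx j hj).ne')
  have hterm : ∀ j ∈ Icc 1 n,
      Real.log (x j) ≤ c * ((j : ℝ) * x j) - 1 - Real.log c - Real.log j := by
    intro j hj
    have hj1 : 1 ≤ j := (mem_Icc.1 hj).1
    have hj0 : (0 : ℝ) < j := by exact_mod_cast hj1
    have hx0 := hx j hj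
    have h := Real.log_le_sub_one_of_pos (show 0 < c * ((j : ℝ) * x j) by positivity)
    rw [Real.log_mul (by positivity) (by positivity),
        Real.log_mul (by positivity) (by positivity)] at h
    linarith
  have hsum2 : ∑ j ∈ Icc 1 n, Real.log (x j) ≤
      c * K - n - n * Real.log c - ∑ j ∈ Icc 1 n, Real.log j := by
    calc ∑ j ∈ Icc 1 n, Real.log (x j)
        ≤ ∑ j ∈ Icc 1 n, (c * ((j : ℝ) * x j) - 1 - Real.log c - Real.log j) :=
          Finset.sum_le_sum hterm
      _ = c * (∑ j ∈ Icc 1 n, (j : ℝ) * x j) - n - n * Real.log c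
          - ∑ j ∈ Icc 1 n, Real.log j := by
          simp [Finset.sum_sub_distrib, Finset.mul_sum, Nat.card_Icc]
      _ ≤ c * K - n - n * Real.log c - ∑ j ∈ Icc 1 n, Real.log j := by
          have := mul_le_mul_of_nonneg_left hsum hc0.le
          linarith
  have hcK : c * K = n := by
    rw [hc]; field_simp
  have hlogc : Real.log c = Real.log n - Real.log K :=
    Real.log_div hn0.ne' hK.ne'
  have hlogK : Real.log K = 1 + 2 * Real.log t := by
    rw [hK', Real.log_mul (Real.exp_ne_zero 1) (by positivity), Real.log_exp,
      Real.log_pow]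
    push_cast; ring
  have h3 : (n : ℝ) * (Real.log t - Real.log n) ≤ t - n := by
    have h2 : Real.log (t / n) ≤ t / n - 1 := Real.log_le_sub_one_of_pos (by positivity)
    rw [Real.log_div ht0.ne' hn0.ne'] at h2
    have h4 := mul_le_mul_of_nonneg_left h2 hn0.le
    have h5 : (n : ℝ) * (t / n - 1) = t - n := by field_simp
    linarith
  have h6 : (n : ℝ) * Real.log c = n * Real.log n - n * Real.log K := by
    rw [hlogc]; ring
  have h7 : (n : ℝ) * Real.log K = n * (1 + 2 * Real.log t) := by rw [hlogK]
  have hS := sum_log_lb n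
  rw [hlog]
  nlinarith [hsum2, hcK, h6, h7, hS, h3]
end

section
/- Let b_1 ≤ b_2 ≤ ... ≤ b_n be integers (n ≥ 1), and set S = ∑_{i>j} (b_i − b_j). If t denotes the number of indices i with b_i ≤ 0, then n · ∑_{b_i ≤ 0} |b_i| ≤ S whenever ∑_{i=1}^n b_i > 0. -/
open Finset

theorem polygon_area_inequality (n : ℕ) (hn : 1 ≤ n) (b : ℕ → ℤ)
    (hmono : ∀ i j, 1 ≤ i → i ≤ j → j ≤ n → b i ≤ b j)
    (hpos : 0 < ∑ i ∈ Icc 1 n, b i) :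
    (n : ℤ) * ∑ i ∈ (Icc 1 n).filter (fun i => b i ≤ 0), |b i| ≤
      ∑ i ∈ Icc 1 n, ∑ j ∈ Icc 1 (i - 1), (b i - b j) := by
  set T := (Icc 1 n).filter (fun i => b i ≤ 0) with hT
  set P := (Icc 1 n).filter (fun i => ¬ b i ≤ 0) with hP
  -- T is contained in Icc 1 (i-1) for each i in P
  have hTsub : ∀ i ∈ P, T ⊆ Icc 1 (i - 1) := by
    intro i hi j hj
    simp only [hP, mem_filter, mem_Icc] at hi
    simp only [hT, mem_filter, mem_Icc] at hj
    have hji : j < i := by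
      by_contra h
      push_neg at h
      exact hi.2 (le_trans (hmono i j hi.1.1 h hj.1.2) hj.2)
    exact mem_Icc.mpr ⟨hj.1.1, by omega⟩
  have habs : ∑ i ∈ T, |b i| = - ∑ i ∈ T, b i := by
    rw [← Finset.sum_neg_distrib]
    refine Finset.sum_congr rfl fun i hi => ?_
    simp only [hT, mem_filter] at hi
    exact abs_of_nonpos hi.2
  -- step 1: drop non-positive b_i terms
  have step1 : ∑ i ∈ P, ∑ j ∈ Icc 1 (i - 1), (b i - b j) ≤
      ∑ i ∈ Icc 1 n, ∑ j ∈ Icc 1 (i - 1), (b i - b j) := by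
    apply Finset.sum_le_sum_of_subset_of_nonneg (filter_subset _ _)
    intro i hi _
    apply Finset.sum_nonneg
    intro j hj
    rw [mem_Icc] at hi hj
    have : b j ≤ b i := hmono j i hj.1 (by omega) hi.2
    linarith
  -- step 2: restrict inner sum to T
  have step2 : ∑ i ∈ P, ∑ j ∈ T, (b i - b j) ≤
      ∑ i ∈ P, ∑ j ∈ Icc 1 (i - 1), (b i - b j) := by
    apply Finset.sum_le_sum
    intro i hi
    apply Finset.sum_le_sum_of_subset_of_nonneg (hTsub i hi)
    intro j hj _
    have hiP := hi
    simp only [hP, mem_filter, mem_Icc] at hiP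
    rw [mem_Icc] at hj
    have : b j ≤ b i := hmono j i hj.1 (by omega) hiP.1.2
    linarith
  -- compute the double sum over P × T
  have hcomp : ∑ i ∈ P, ∑ j ∈ T, (b i - b j) =
      (T.card : ℤ) * ∑ i ∈ P, b i - (P.card : ℤ) * ∑ j ∈ T, b j := by
    have h1 : ∀ i, ∑ j ∈ T, (b i - b j) = (T.card : ℤ) * b i - ∑ j ∈ T, b j := by
      intro i
      rw [Finset.sum_sub_distrib, Finset.sum_const, nsmul_eq_mul]
    simp_rw [h1]
    rw [Finset.sum_sub_distrib, Finset.sum_const, nsmul_eq_mul, ← Finset.mul_sum]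
  have hcard : T.card + P.card = n := by
    rw [hT, hP, Finset.card_filter_add_card_filter_not, Nat.card_Icc]
    omega
  have hsplit : ∑ i ∈ T, b i + ∑ i ∈ P, b i = ∑ i ∈ Icc 1 n, b i := by
    rw [hT, hP]
    exact Finset.sum_filter_add_sum_filter_not _ _ _
  have hSTnonpos : ∑ i ∈ T, b i ≤ 0 := by
    apply Finset.sum_nonpos
    intro i hi
    simp only [hT, mem_filter] at hi
    exact hi.2
  -- finish with arithmetic
  refine le_trans ?_ (le_trans step2 step1)
  rw [habs, hcomp]
  have ht : (0:ℤ) ≤ (T.card : ℤ) := Int.natCast_nonneg _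
  have hp : (0:ℤ) ≤ (P.card : ℤ) := Int.natCast_nonneg _
  have hn' : (n:ℤ) = (T.card : ℤ) + (P.card : ℤ) := by exact_mod_cast hcard.symm
  nlinarith [hpos, hsplit, hSTnonpos, mul_nonneg ht (by linarith [hpos, hsplit, hSTnonpos] : (0:ℤ) ≤ ∑ i ∈ P, b i + ∑ i ∈ T, b i)]
end

section
/- Let b_1 ≤ ... ≤ b_n be integers with 0 < ∑_{i=1}^n b_i ≤ C√k and ∑_{i>j}(b_i − b_j) ≤ C·k for some constants C > 0 and k ≥ 1. Then ∑_{i=1}^n |b_i| ≤ 2Ck/n + C√k. -/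
open Finset

theorem choosing_twisting (n : ℕ) (hn : 1 ≤ n) (b : ℕ → ℤ) (C k : ℝ)
    (hC : 0 < C) (hk : 1 ≤ k)
    (hmono : ∀ i j, 1 ≤ i → i ≤ j → j ≤ n → b i ≤ b j)
    (hpos : 0 < ∑ i ∈ Icc 1 n, b i)
    (hsum : ((∑ i ∈ Icc 1 n, b i : ℤ) : ℝ) ≤ C * Real.sqrt k)
    (hspread : ((∑ i ∈ Icc 1 n, ∑ j ∈ Icc 1 (i - 1), (b i - b j) : ℤ) : ℝ) ≤ C * k) :
    ((∑ i ∈ Icc 1 n, |b i| : ℤ) : ℝ) ≤ 2 * C * k / n + C * Real.sqrt k := by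
  have hIcc : ∀ m : ℕ, Icc 1 m = Ioc 0 m := by
    intro m; ext x; simp [Nat.lt_iff_add_one_le]
  set S : ℤ := ∑ i ∈ Icc 1 n, b i with hS
  set N : ℤ := ∑ i ∈ Icc 1 n, max (-(b i)) 0 with hN
  have habs : (∑ i ∈ Icc 1 n, |b i|) = S + 2 * N := by
    rw [hS, hN, Finset.mul_sum, ← Finset.sum_add_distrib]
    apply Finset.sum_congr rfl
    intro i _
    rcases le_total 0 (b i) with h | h
    · rw [abs_of_nonneg h, max_eq_right (by linarith), mul_zero, add_zero]
    · rw [abs_of_nonpos h, max_eq_left (by linarith)]; ring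
  have hswap : (∑ i ∈ Icc 1 n, ∑ j ∈ Icc 1 (i - 1), (b i - b j))
      = ∑ j ∈ Icc 1 n, ∑ i ∈ Icc (j + 1) n, (b i - b j) := by
    rw [Finset.sum_comm' (t' := Icc 1 n) (s' := fun j => Icc (j + 1) n)]
    intro i j
    simp only [mem_Icc]
    omega
  have hkey : (n : ℤ) * N ≤ ∑ i ∈ Icc 1 n, ∑ j ∈ Icc 1 (i - 1), (b i - b j) := by
    rw [hswap, hN, Finset.mul_sum]
    apply Finset.sum_le_sum
    intro j hj
    simp only [mem_Icc] at hj
    rcases le_or_gt 0 (b j) with h | h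
    · rw [max_eq_right (by linarith), mul_zero]
      apply Finset.sum_nonneg
      intro i hi
      simp only [mem_Icc] at hi
      have := hmono j i hj.1 (by omega) hi.2
      linarith
    · rw [max_eq_left (by linarith)]
      have hsplit : (∑ i ∈ Icc 1 j, (b i - b j)) + (∑ i ∈ Icc (j + 1) n, (b i - b j))
          = ∑ i ∈ Icc 1 n, (b i - b j) := by
        rw [hIcc j, hIcc n]
        have : Icc (j + 1) n = Ioc j n := by ext x; simp only [mem_Icc, mem_Ioc]; omega
        rw [this]
        exact Finset.sum_Ioc_consecutive _ (Nat.zero_le j) hj.2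
      have h1 : (∑ i ∈ Icc 1 j, (b i - b j)) ≤ 0 := by
        apply Finset.sum_nonpos
        intro i hi
        simp only [mem_Icc] at hi
        have := hmono i j hi.1 hi.2 hj.2
        linarith
      have h2 : ∑ i ∈ Icc 1 n, (b i - b j) = S - n * b j := by
        rw [Finset.sum_sub_distrib, ← hS, Finset.sum_const, Nat.card_Icc]
        simp
      have hS1 : 1 ≤ S := hpos
      have : ∑ i ∈ Icc (j + 1) n, (b i - b j) = S - n * b j - ∑ i ∈ Icc 1 j, (b i - b j) := by
        rw [← h2]; linarith [hsplit]
      rw [this]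
      nlinarith
  -- pass to ℝ
  have hn' : (0 : ℝ) < (n : ℝ) := by exact_mod_cast hn
  have hNk : (N : ℝ) ≤ C * k / n := by
    rw [le_div_iff₀ hn']
    have : ((n : ℤ) * N : ℤ) ≤ ((∑ i ∈ Icc 1 n, ∑ j ∈ Icc 1 (i - 1), (b i - b j) : ℤ)) := hkey
    have hcast : ((n : ℝ) * (N : ℝ)) ≤ C * k := by
      calc ((n : ℝ) * (N : ℝ)) = (((n : ℤ) * N : ℤ) : ℝ) := by push_cast; ring
        _ ≤ ((∑ i ∈ Icc 1 n, ∑ j ∈ Icc 1 (i - 1), (b i - b j) : ℤ) : ℝ) := by exact_mod_cast this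
        _ ≤ C * k := hspread
    linarith [hcast]
  have hfin : ((∑ i ∈ Icc 1 n, |b i| : ℤ) : ℝ) = (S : ℝ) + 2 * (N : ℝ) := by
    rw [habs]; push_cast; ring
  rw [hfin]
  have h3 : 2 * C * k / n = 2 * (C * k / n) := by ring
  rw [h3]
  linarith [hsum, hNk]
end

section
/- Let b_1 ≤ b_2 ≤ ... ≤ b_n be real numbers, and for 1 ≤ i ≤ n set B_i = b_1 + ... + b_i. For 1 ≤ i ≤ n−1 let T_i be the triangle in ℝ² with vertices (0,0), (i, B_i), (i+1, B_{i+1}). Then 2·∑_{i=1}^{n−1} Area(T_i) = ∑_{i>j} (b_i − b_j). -/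
open Finset

/-- Unsigned Euclidean area of the triangle with vertices `(0,0)`, `p`, `q`. -/
noncomputable def triArea (p q : ℝ × ℝ) : ℝ := |p.1 * q.2 - p.2 * q.1| / 2

theorem polygon_area_computation (n : ℕ) (hn : 1 ≤ n) (b : ℕ → ℝ)
    (hmono : ∀ i j, 1 ≤ i → i ≤ j → j ≤ n → b i ≤ b j)
    (B : ℕ → ℝ) (hB : ∀ i, B i = ∑ j ∈ Icc 1 i, b j) :
    2 * ∑ i ∈ Icc 1 (n - 1), triArea ((i : ℝ), B i) (((i : ℝ) + 1), B (i + 1)) =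
      ∑ i ∈ Icc 1 n, ∑ j ∈ Icc 1 (i - 1), (b i - b j) := by
  have key : ∀ i ∈ Icc 1 (n - 1),
      2 * triArea ((i : ℝ), B i) (((i : ℝ) + 1), B (i + 1))
        = ∑ j ∈ Icc 1 i, (b (i + 1) - b j) := by
    intro i hi
    simp only [mem_Icc] at hi
    have hin : i + 1 ≤ n := by omega
    have hcross : (i : ℝ) * B (i + 1) - B i * ((i : ℝ) + 1)
        = ∑ j ∈ Icc 1 i, (b (i + 1) - b j) := by
      rw [hB, hB, Finset.sum_Icc_succ_top (by omega : 1 ≤ i + 1),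
        Finset.sum_sub_distrib, Finset.sum_const, nsmul_eq_mul, Nat.card_Icc]
      push_cast [Nat.add_sub_cancel]
      ring
    have hnonneg : (0 : ℝ) ≤ ∑ j ∈ Icc 1 i, (b (i + 1) - b j) := by
      apply Finset.sum_nonneg
      intro j hj
      simp only [mem_Icc] at hj
      have := hmono j (i + 1) hj.1 (by omega) hin
      linarith
    unfold triArea
    dsimp only
    rw [hcross, abs_of_nonneg hnonneg]
    ring
  rw [Finset.mul_sum, Finset.sum_congr rfl key]
  have hsub : Icc 2 n ⊆ Icc 1 n := Finset.Icc_subset_Icc_left (by omega)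
  rw [show (∑ i ∈ Icc 1 n, ∑ j ∈ Icc 1 (i - 1), (b i - b j))
      = ∑ i ∈ Icc 2 n, ∑ j ∈ Icc 1 (i - 1), (b i - b j) from
    (Finset.sum_subset hsub (by
      intro x hx hx2
      simp only [mem_Icc] at hx hx2
      have : x = 1 := by omega
      subst this
      simp)).symm]
  refine Finset.sum_nbij' (fun i => i + 1) (fun i => i - 1) ?_ ?_ ?_ ?_ ?_
  · intro a ha; simp only [mem_Icc] at *; omega
  · intro a ha; simp only [mem_Icc] at *; omega
  · intro a ha; simp only [mem_Icc] at ha; show a + 1 - 1 = a; omega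
  · intro a ha; simp only [mem_Icc] at ha; show a - 1 + 1 = a; omega
  · intro a ha
    simp only [Nat.add_sub_cancel]
end

section
/- Let k ≥ 1 and let t_1, ..., t_m be positive integers with ∑_{j=1}^m j·t_j ≤ C'·k for some C' > 0. Then ∑_{j=1}^m log(t_j) ≤ 2·√(C'·k/e). -/
open Finset

private lemma log_le_div_exp {x : ℝ} (hx : 0 < x) : Real.log x ≤ x / Real.exp 1 := by
  have h := Real.log_le_sub_one_of_pos (x := x / Real.exp 1) (by positivity)
  rw [Real.log_div (ne_of_gt hx) (by positivity), Real.log_exp] at h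
  linarith

private lemma log_factorial_ge (n : ℕ) :
    (n : ℝ) * Real.log n - n ≤ Real.log (n.factorial) := by
  induction n with
  | zero => simp
  | succ n ih =>
    rcases Nat.eq_zero_or_pos n with rfl | hn
    · simp
    have hn' : (0:ℝ) < n := by exact_mod_cast hn
    have hfact : (0:ℝ) < (n.factorial : ℝ) := by exact_mod_cast n.factorial_pos
    rw [Nat.factorial_succ, Nat.cast_mul, Real.log_mul (by positivity) (ne_of_gt hfact)]
    have hlog : Real.log ((n+1:ℝ)/n) ≤ (n+1:ℝ)/n - 1 :=
      Real.log_le_sub_one_of_pos (by positivity)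
    rw [Real.log_div (by positivity) (ne_of_gt hn')] at hlog
    have h2 : (n:ℝ) * Real.log (n+1) ≤ (n:ℝ) * Real.log n + 1 := by
      have h3 : (n+1:ℝ)/n - 1 = 1/n := by field_simp; ring
      rw [h3] at hlog
      have := mul_le_mul_of_nonneg_left hlog (le_of_lt hn')
      have h4 : (n:ℝ) * (1/n) = 1 := by field_simp
      nlinarith
    push_cast
    nlinarith [Real.log_nonneg (by linarith : (1:ℝ) ≤ (n:ℝ)+1)]

theorem sum_log_twisting_bound (m : ℕ) (t : ℕ → ℕ) (C' k : ℝ) (hC' : 0 < C') (hk : 1 ≤ k)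
    (hpos : ∀ j ∈ Icc 1 m, 0 < t j)
    (hsum : ((∑ j ∈ Icc 1 m, j * t j : ℕ) : ℝ) ≤ C' * k) :
    ∑ j ∈ Icc 1 m, Real.log (t j) ≤ 2 * Real.sqrt (C' * k / Real.exp 1) := by
  have hN : 0 < C' * k := by nlinarith
  have he : (0:ℝ) < Real.exp 1 := Real.exp_pos 1
  set a := Real.sqrt (C' * k * Real.exp 1) with ha_def
  have ha : 0 < a := Real.sqrt_pos.2 (by positivity)
  have ha2 : a ^ 2 = C' * k * Real.exp 1 := Real.sq_sqrt (by positivity)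
  -- per-term bound
  have key : ∀ j ∈ Icc 1 m, Real.log (t j) ≤ (j : ℝ) * (t j) / a + max 0 (Real.log a - 1 - Real.log j) := by
    intro j hj
    obtain ⟨hj1, _⟩ := mem_Icc.1 hj
    have htj : (0:ℝ) < (t j : ℝ) := by exact_mod_cast hpos j hj
    have hjpos : (0:ℝ) < (j:ℝ) := by exact_mod_cast hj1
    have h1 : Real.log ((j:ℝ)/a * (t j)) ≤ (j:ℝ)/a * (t j) - 1 :=
      Real.log_le_sub_one_of_pos (by positivity)
    rw [Real.log_mul (by positivity) (ne_of_gt htj),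
      Real.log_div (ne_of_gt hjpos) (ne_of_gt ha)] at h1
    have hdiv : (j:ℝ)/a * (t j) = (j:ℝ) * (t j) / a := by ring
    rcases le_or_gt (Real.log a - 1 - Real.log j) 0 with h | h
    · rw [max_eq_left h, add_zero]
      rw [hdiv] at h1; linarith
    · rw [max_eq_right (le_of_lt h)]
      rw [hdiv] at h1; linarith
  have hsum' : ∑ j ∈ Icc 1 m, ((j:ℝ) * (t j : ℝ)) ≤ C' * k := by
    push_cast at hsum; exact hsum
  have step1 : ∑ j ∈ Icc 1 m, Real.log (t j) ≤
      C' * k / a + ∑ j ∈ Icc 1 m, max 0 (Real.log a - 1 - Real.log j) := by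
    calc ∑ j ∈ Icc 1 m, Real.log (t j)
        ≤ ∑ j ∈ Icc 1 m, ((j : ℝ) * (t j) / a + max 0 (Real.log a - 1 - Real.log j)) :=
          Finset.sum_le_sum key
      _ = (∑ j ∈ Icc 1 m, (j : ℝ) * (t j)) / a
            + ∑ j ∈ Icc 1 m, max 0 (Real.log a - 1 - Real.log j) := by
          rw [Finset.sum_add_distrib, Finset.sum_div]
      _ ≤ _ := by gcongr
  -- bound the max sum
  set n := ⌊a / Real.exp 1⌋₊ with hn_def
  have hmax : ∑ j ∈ Icc 1 m, max 0 (Real.log a - 1 - Real.log j) ≤ a / Real.exp 1 := by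
    have hnonneg : ∀ j ∈ Icc 1 (max m n), (0:ℝ) ≤ max 0 (Real.log a - 1 - Real.log j) :=
      fun j _ => le_max_left _ _
    have hsub : Icc 1 m ⊆ Icc 1 (max m n) := Icc_subset_Icc le_rfl (le_max_left _ _)
    have h1 : ∑ j ∈ Icc 1 m, max 0 (Real.log a - 1 - Real.log j)
        ≤ ∑ j ∈ Icc 1 (max m n), max 0 (Real.log a - 1 - Real.log j) :=
      Finset.sum_le_sum_of_subset_of_nonneg hsub (fun j hj _ => le_max_left _ _)
    -- terms with j > n vanish
    have h2 : ∑ j ∈ Icc 1 (max m n), max 0 (Real.log a - 1 - Real.log j)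
        = ∑ j ∈ Icc 1 n, max 0 (Real.log a - 1 - Real.log j) := by
      symm
      apply Finset.sum_subset (Icc_subset_Icc le_rfl (le_max_right _ _))
      intro j hj hj'
      simp only [mem_Icc] at hj hj'
      have hjn : n < j := by omega
      have hj1 : 1 ≤ j := hj.1
      have hjpos : (0:ℝ) < (j:ℝ) := by exact_mod_cast hj1
      have hlt : a / Real.exp 1 < (j:ℝ) := by
        have := (Nat.floor_lt (by positivity : (0:ℝ) ≤ a / Real.exp 1)).1 hjn
        exact this
      have hlog : Real.log (a / Real.exp 1) < Real.log j :=
        Real.log_lt_log (by positivity) hlt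
      rw [Real.log_div (ne_of_gt ha) (ne_of_gt he), Real.log_exp] at hlog
      exact max_eq_left (by linarith)
    -- the remaining sum
    have hprod : (∏ j ∈ Icc 1 n, (j:ℝ)) = (n.factorial : ℝ) := by
      rw [← Nat.cast_prod]
      congr 1
      rw [← Finset.Ico_add_one_right_eq_Icc, Finset.prod_Ico_id_eq_factorial]
    have h3 : ∑ j ∈ Icc 1 n, max 0 (Real.log a - 1 - Real.log j)
        = (n:ℝ) * (Real.log a - 1) - Real.log (n.factorial) := by
      have heq : ∀ j ∈ Icc 1 n, max 0 (Real.log a - 1 - Real.log j)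
          = Real.log a - 1 - Real.log j := by
        intro j hj
        obtain ⟨hj1, hjn⟩ := mem_Icc.1 hj
        have hjpos : (0:ℝ) < (j:ℝ) := by exact_mod_cast hj1
        have hle : (j:ℝ) ≤ a / Real.exp 1 := by
          calc (j:ℝ) ≤ (n:ℝ) := by exact_mod_cast hjn
            _ ≤ a / Real.exp 1 := Nat.floor_le (by positivity)
        have hlog : Real.log j ≤ Real.log (a / Real.exp 1) :=
          Real.log_le_log hjpos hle
        rw [Real.log_div (ne_of_gt ha) (ne_of_gt he), Real.log_exp] at hlog
        exact max_eq_right (by linarith)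
      rw [Finset.sum_congr rfl heq, Finset.sum_sub_distrib, Finset.sum_const,
        Nat.card_Icc, ← Real.log_prod (fun j hj => by
          have : 1 ≤ j := (mem_Icc.1 hj).1
          positivity), hprod]
      simp [nsmul_eq_mul]
    -- bound (n)(log a - 1) - log n! ≤ a / e
    have h4 : (n:ℝ) * (Real.log a - 1) - Real.log (n.factorial) ≤ a / Real.exp 1 := by
      rcases Nat.eq_zero_or_pos n with hn0 | hn1
      · simp [hn0]
        positivity
      · have hn' : (0:ℝ) < (n:ℝ) := by exact_mod_cast hn1
        have hfac := log_factorial_ge n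
        have hle : (n:ℝ) ≤ a / Real.exp 1 := Nat.floor_le (by positivity)
        have hlognn : Real.log (a / (n:ℝ)) ≤ a / (n:ℝ) / Real.exp 1 :=
          log_le_div_exp (by positivity)
        rw [Real.log_div (ne_of_gt ha) (ne_of_gt hn')] at hlognn
        have h5 : (n:ℝ) * (Real.log a - Real.log n) ≤ a / Real.exp 1 := by
          have := mul_le_mul_of_nonneg_left hlognn (le_of_lt hn')
          have h6 : (n:ℝ) * (a / (n:ℝ) / Real.exp 1) = a / Real.exp 1 := by
            field_simp
          rw [h6] at this
          linarith
        nlinarith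
    calc ∑ j ∈ Icc 1 m, max 0 (Real.log a - 1 - Real.log j)
        ≤ ∑ j ∈ Icc 1 (max m n), max 0 (Real.log a - 1 - Real.log j) := h1
      _ = ∑ j ∈ Icc 1 n, max 0 (Real.log a - 1 - Real.log j) := h2
      _ = (n:ℝ) * (Real.log a - 1) - Real.log (n.factorial) := h3
      _ ≤ a / Real.exp 1 := h4
  -- conclude
  have hs : (0:ℝ) < Real.sqrt (C' * k / Real.exp 1) := Real.sqrt_pos.2 (by positivity)
  set s := Real.sqrt (C' * k / Real.exp 1) with hs_def
  have hs2 : s ^ 2 = C' * k / Real.exp 1 := Real.sq_sqrt (by positivity)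
  have hase : a = s * Real.exp 1 := by
    have hsq : a ^ 2 = (s * Real.exp 1) ^ 2 := by
      rw [mul_pow, hs2, ha2, pow_two]
      field_simp
    have hpos2 : 0 < s * Real.exp 1 := by positivity
    nlinarith [sq_nonneg (a - s * Real.exp 1), sq_nonneg (a + s * Real.exp 1)]
  have hfinal : C' * k / a + a / Real.exp 1 = 2 * s := by
    rw [hase]
    have hCk : C' * k = s ^ 2 * Real.exp 1 := by
      rw [hs2]; field_simp
    rw [hCk]
    field_simp
    ring
  linarith [step1, hmax]
end
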